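/- Let G be a connected graph on n vertices, m edges, and t triangles. Then PI_w(G) ≤ n²m − 9t²/m. -/

import Mathlib

open Finset
open scoped Classical

/-- Number of vertices strictly closer to `u` than to `v`. -/
noncomputable def ncl {V : Type*} [Fintype V] (G : SimpleGraph V) (u v : V) : ℕ :=
  (Finset.univ.filter fun x => G.dist x u < G.dist x v).card

/-- Weighted vertex PI index: each edge `uv` contributes
`(deg u + deg v) * (n_u(e) + n_v(e))`; each edge is counted twice in the double sum. -/
noncomputable def PIw {V : Type*} [Fintype V] (G : SimpleGraph V) : ℝ :=
  (∑ u, ∑ v, if G.Adj u v then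
    (((G.degree u + G.degree v : ℕ) : ℝ) * ((ncl G u v + ncl G v u : ℕ) : ℝ)) else 0) / 2

/-- common neighbors count -/
noncomputable def cN {V : Type*} [Fintype V] (G : SimpleGraph V) (u v : V) : ℕ :=
  (Finset.univ.filter fun w => G.Adj u w ∧ G.Adj v w).card

lemma deg_add_deg_le {V : Type*} [Fintype V] (G : SimpleGraph V) (u v : V) :
    G.degree u + G.degree v ≤ Fintype.card V + cN G u v := by
  classical
  have h1 : G.degree u + G.degree v
      = (G.neighborFinset u ∪ G.neighborFinset v).card
        + (G.neighborFinset u ∩ G.neighborFinset v).card := by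
    rw [SimpleGraph.degree, SimpleGraph.degree, ← Finset.card_union_add_card_inter]
  have h2 : (G.neighborFinset u ∩ G.neighborFinset v) =
      Finset.univ.filter fun w => G.Adj u w ∧ G.Adj v w := by
    ext w; simp [SimpleGraph.mem_neighborFinset]
  rw [h1, h2, cN]
  gcongr ?_ + _
  exact le_trans (Finset.card_le_univ _) (le_of_eq (Finset.card_univ))

lemma ncl_add_ncl_le {V : Type*} [Fintype V] (G : SimpleGraph V) (u v : V) :
    ncl G u v + ncl G v u + cN G u v ≤ Fintype.card V := by
  classical
  set A := Finset.univ.filter fun x => G.dist x u < G.dist x v with hA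
  set B := Finset.univ.filter fun x => G.dist x v < G.dist x u with hB
  set C := Finset.univ.filter fun w => G.Adj u w ∧ G.Adj v w with hC
  have hdist : ∀ w ∈ C, G.dist w u = 1 ∧ G.dist w v = 1 := by
    intro w hw
    rw [hC, Finset.mem_filter] at hw
    exact ⟨SimpleGraph.dist_eq_one_iff_adj.2 hw.2.1.symm, SimpleGraph.dist_eq_one_iff_adj.2 hw.2.2.symm⟩
  have hAB : Disjoint A B := by
    rw [Finset.disjoint_left]
    intro x hx hx'
    rw [hA, Finset.mem_filter] at hx
    rw [hB, Finset.mem_filter] at hx'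
    omega
  have hABC : Disjoint (A ∪ B) C := by
    rw [Finset.disjoint_left]
    intro x hx hx'
    obtain ⟨h1, h2⟩ := hdist x hx'
    rcases Finset.mem_union.1 hx with h | h
    · rw [hA, Finset.mem_filter] at h; omega
    · rw [hB, Finset.mem_filter] at h; omega
  calc ncl G u v + ncl G v u + cN G u v = (A ∪ B ∪ C).card := by
        rw [Finset.card_union_of_disjoint hABC, Finset.card_union_of_disjoint hAB]; rfl
    _ ≤ Fintype.card V := Finset.card_le_univ _

lemma key_edge {V : Type*} [Fintype V] (G : SimpleGraph V) (u v : V) :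
    ((G.degree u + G.degree v : ℕ) : ℝ) * ((ncl G u v + ncl G v u : ℕ) : ℝ)
      ≤ (Fintype.card V : ℝ) ^ 2 - (cN G u v : ℝ) ^ 2 := by
  have h1 := deg_add_deg_le G u v
  have h2 := ncl_add_ncl_le G u v
  have h1' : ((G.degree u + G.degree v : ℕ) : ℝ) ≤ (Fintype.card V : ℝ) + cN G u v := by
    exact_mod_cast h1
  have h2' : ((ncl G u v + ncl G v u : ℕ) : ℝ) ≤ (Fintype.card V : ℝ) - cN G u v := by
    have : ((ncl G u v + ncl G v u : ℕ) : ℝ) + (cN G u v : ℝ) ≤ (Fintype.card V : ℝ) := by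
      exact_mod_cast h2
    linarith
  have ha : (0:ℝ) ≤ ((G.degree u + G.degree v : ℕ) : ℝ) := Nat.cast_nonneg _
  have hb : (0:ℝ) ≤ ((ncl G u v + ncl G v u : ℕ) : ℝ) := Nat.cast_nonneg _
  have hc : (0:ℝ) ≤ ((cN G u v : ℕ) : ℝ) := Nat.cast_nonneg _
  nlinarith

/-- The set of ordered triangles. -/
noncomputable def oT {V : Type*} [Fintype V] (G : SimpleGraph V) : Finset (V × V × V) :=
  Finset.univ.filter fun p => G.Adj p.1 p.2.1 ∧ G.Adj p.1 p.2.2 ∧ G.Adj p.2.1 p.2.2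

lemma oT_card {V : Type*} [Fintype V] (G : SimpleGraph V) :
    (oT G).card = 6 * (G.cliqueFinset 3).card := by
  classical
  rw [Finset.card_eq_sum_card_fiberwise
    (f := fun p : V × V × V => ({p.1, p.2.1, p.2.2} : Finset V)) (t := G.cliqueFinset 3) ?_]
  · rw [Finset.sum_congr rfl ?_, Finset.sum_const, smul_eq_mul, mul_comm]
    intro s hs
    rw [SimpleGraph.mem_cliqueFinset_iff, SimpleGraph.is3Clique_iff] at hs
    obtain ⟨a, b, c, hab, hac, hbc, rfl⟩ := hs
    have hab' : a ≠ b := hab.ne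
    have hac' : a ≠ c := hac.ne
    have hbc' : b ≠ c := hbc.ne
    have : (oT G).filter (fun p => ({p.1, p.2.1, p.2.2} : Finset V) = {a, b, c})
        = ({(a,b,c),(a,c,b),(b,a,c),(b,c,a),(c,a,b),(c,b,a)} : Finset (V × V × V)) := by
      ext ⟨x, y, z⟩
      simp only [Finset.mem_filter, oT, Finset.mem_univ, true_and, Finset.mem_insert,
        Finset.mem_singleton, Prod.mk.injEq]
      constructor
      · rintro ⟨⟨hxy, hxz, hyz⟩, hset⟩
        have hx : x ∈ ({a, b, c} : Finset V) := by rw [← hset]; simp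
        have hy : y ∈ ({a, b, c} : Finset V) := by rw [← hset]; simp
        have hz : z ∈ ({a, b, c} : Finset V) := by rw [← hset]; simp
        simp only [Finset.mem_insert, Finset.mem_singleton] at hx hy hz
        have h1 : x ≠ y := hxy.ne
        have h2 : x ≠ z := hxz.ne
        have h3 : y ≠ z := hyz.ne
        rcases hx with rfl | rfl | rfl <;> rcases hy with rfl | rfl | rfl <;>
          rcases hz with rfl | rfl | rfl <;> simp_all
      · rintro (⟨rfl,rfl,rfl⟩|⟨rfl,rfl,rfl⟩|⟨rfl,rfl,rfl⟩|⟨rfl,rfl,rfl⟩|⟨rfl,rfl,rfl⟩|⟨rfl,rfl,rfl⟩) <;>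
          refine ⟨⟨?_, ?_, ?_⟩, ?_⟩ <;>
          first
            | exact hab | exact hac | exact hbc
            | exact hab.symm | exact hac.symm | exact hbc.symm
            | (ext w; simp only [Finset.mem_insert, Finset.mem_singleton]; try tauto)
    rw [this]
    rw [Finset.card_insert_of_notMem (by simp [Prod.ext_iff]; tauto),
      Finset.card_insert_of_notMem (by simp [Prod.ext_iff]; tauto),
      Finset.card_insert_of_notMem (by simp [Prod.ext_iff]; tauto),
      Finset.card_insert_of_notMem (by simp [Prod.ext_iff]; tauto),
      Finset.card_insert_of_notMem (by simp [Prod.ext_iff]; tauto),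
      Finset.card_singleton]
  · intro p hp
    rw [oT, Finset.mem_coe, Finset.mem_filter] at hp
    rw [Finset.mem_coe, SimpleGraph.mem_cliqueFinset_iff]
    exact SimpleGraph.is3Clique_triple_iff.2 ⟨hp.2.1, hp.2.2.1, hp.2.2.2⟩

lemma sum_cN_eq {V : Type*} [Fintype V] (G : SimpleGraph V) :
    ∑ u, ∑ v, (if G.Adj u v then cN G u v else 0) = 6 * (G.cliqueFinset 3).card := by
  classical
  rw [← oT_card]
  rw [oT, Finset.card_filter]
  rw [Fintype.sum_prod_type]
  refine Finset.sum_congr rfl fun u _ => ?_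
  rw [Fintype.sum_prod_type]
  refine Finset.sum_congr rfl fun v _ => ?_
  by_cases h : G.Adj u v
  · simp only [h, if_true, true_and, cN, Finset.card_filter]
  · simp [h]

theorem PIw_upper_bound_triangles {V : Type*} [Fintype V] (G : SimpleGraph V)
    (hconn : G.Connected) :
    PIw G ≤ (Fintype.card V : ℝ) ^ 2 * (G.edgeFinset.card : ℝ) -
      9 * ((G.cliqueFinset 3).card : ℝ) ^ 2 / (G.edgeFinset.card : ℝ) := by
  classical
  set n : ℝ := (Fintype.card V : ℝ)
  set m : ℝ := (G.edgeFinset.card : ℝ)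
  set t : ℝ := ((G.cliqueFinset 3).card : ℝ)
  by_cases hm : G.edgeFinset.card = 0
  · have hbot : G = ⊥ := SimpleGraph.edgeFinset_eq_empty.1 (Finset.card_eq_zero.1 hm)
    subst hbot
    have ht : ((⊥ : SimpleGraph V).cliqueFinset 3).card = 0 := by
      rw [Finset.card_eq_zero, SimpleGraph.cliqueFinset_eq_empty_iff]
      intro s hs
      obtain ⟨a, b, c, hab, _, _, _⟩ := SimpleGraph.is3Clique_iff.1 hs
      exact hab
    simp [PIw, m, t, hm, ht]
  -- set of ordered adjacent pairs
  set P : Finset (V × V) := Finset.univ.filter fun p => G.Adj p.1 p.2 with hP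
  have hPcard : (P.card : ℝ) = 2 * m := by
    have : P.card = ∑ u, G.degree u := by
      rw [hP, Finset.card_filter, Fintype.sum_prod_type]
      refine Finset.sum_congr rfl fun u _ => ?_
      rw [← SimpleGraph.card_neighborFinset_eq_degree, SimpleGraph.neighborFinset_eq_filter,
        Finset.card_filter]
    rw [this, G.sum_degrees_eq_twice_card_edges]
    push_cast
    ring
  -- rewrite the double sums as sums over P
  have hrw : ∀ f : V → V → ℝ, (∑ u, ∑ v, if G.Adj u v then f u v else 0)
      = ∑ p ∈ P, f p.1 p.2 := by
    intro f
    rw [hP, Finset.sum_filter, Fintype.sum_prod_type]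
  -- step 1
  have step1 : (∑ u, ∑ v, if G.Adj u v then
      (((G.degree u + G.degree v : ℕ) : ℝ) * ((ncl G u v + ncl G v u : ℕ) : ℝ)) else 0)
      ≤ 2 * n * n * m - ∑ p ∈ P, (cN G p.1 p.2 : ℝ) ^ 2 := by
    rw [hrw]
    calc ∑ p ∈ P, ((G.degree p.1 + G.degree p.2 : ℕ) : ℝ) * ((ncl G p.1 p.2 + ncl G p.2 p.1 : ℕ) : ℝ)
        ≤ ∑ p ∈ P, (n ^ 2 - (cN G p.1 p.2 : ℝ) ^ 2) :=
          Finset.sum_le_sum fun p _ => key_edge G p.1 p.2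
      _ = 2 * n * n * m - ∑ p ∈ P, (cN G p.1 p.2 : ℝ) ^ 2 := by
          rw [Finset.sum_sub_distrib, Finset.sum_const, nsmul_eq_mul, hPcard]; ring
  -- Cauchy-Schwarz
  have hsum : ∑ p ∈ P, (cN G p.1 p.2 : ℝ) = 6 * t := by
    rw [← hrw fun u v => (cN G u v : ℝ)]
    have := sum_cN_eq G
    calc (∑ u, ∑ v, if G.Adj u v then (cN G u v : ℝ) else 0)
        = ((∑ u, ∑ v, if G.Adj u v then cN G u v else 0 : ℕ) : ℝ) := by
          push_cast [apply_ite (Nat.cast : ℕ → ℝ)]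
          rfl
      _ = 6 * t := by rw [this]; push_cast; ring
  have hcs : (6 * t) ^ 2 ≤ (2 * m) * ∑ p ∈ P, (cN G p.1 p.2 : ℝ) ^ 2 := by
    rw [← hsum, ← hPcard]
    exact_mod_cast sq_sum_le_card_mul_sum_sq (s := P) (f := fun p => (cN G p.1 p.2 : ℝ))
  have hm' : (0 : ℝ) < m := by
    have h0 : 0 < G.edgeFinset.card := Nat.pos_of_ne_zero hm
    show (0:ℝ) < ((G.edgeFinset.card : ℕ) : ℝ)
    exact_mod_cast h0
  have hcs' : 18 * t ^ 2 / m ≤ ∑ p ∈ P, (cN G p.1 p.2 : ℝ) ^ 2 := by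
    rw [div_le_iff₀ hm']
    nlinarith
  rw [PIw, div_le_iff₀ (by norm_num : (0:ℝ) < 2)]
  have e1 : ((Fintype.card V : ℝ) ^ 2 * m - 9 * t ^ 2 / m) * 2 = 2 * n * n * m - 18 * t ^ 2 / m := by
    simp only [n]; ring
  rw [e1]
  linarith [step1, hcs']
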